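/- Let G be a simple undirected graph, v a degree-1 vertex whose unique neighbor u has degree 2, and let w be the other neighbor of u. Then there exists a minimum 3-path vertex cover C of G with w ∈ C and u, v ∉ C. -/
import Mathlib


open Finset

variable {V : Type*}

def IsP3VC (G : SimpleGraph V) (C : Finset V) : Prop :=
  ∀ a b c : V, G.Adj a b → G.Adj b c → a ≠ c → a ∈ C ∨ b ∈ C ∨ c ∈ C

def IsMinP3VC (G : SimpleGraph V) (C : Finset V) : Prop :=
  IsP3VC G C ∧ ∀ D : Finset V, IsP3VC G D → C.card ≤ D.card

/-- for a tail `v` (degree-1) with degree-2 neighbor `u` whose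
other neighbor is `w`, there is a minimum 3-path vertex cover containing `w`
and avoiding `u` and `v`. -/
theorem stmt3 [Fintype V] [DecidableEq V] (G : SimpleGraph V) [DecidableRel G.Adj]
    (v u w : V)
    (hdegv : G.degree v = 1) (hvu : G.Adj v u)
    (hdegu : G.degree u = 2) (huw : G.Adj u w) (hwv : w ≠ v) :
    ∃ C : Finset V, IsMinP3VC G C ∧ w ∈ C ∧ u ∉ C ∧ v ∉ C := by
  classical
  have huv : G.Adj u v := hvu.symm
  have hwu : w ≠ u := fun h => G.irrefl (h ▸ huw)
  have hvw : v ≠ w := hwv.symm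
  have hvu' : v ≠ u := G.ne_of_adj hvu
  -- neighbors of v
  have hNv : G.neighborFinset v = {u} := by
    refine (Finset.eq_of_subset_of_card_le ?_ ?_).symm
    · intro x hx
      simp only [Finset.mem_singleton] at hx
      simp [hx, SimpleGraph.mem_neighborFinset, hvu]
    · rw [Finset.card_singleton]
      rw [G.card_neighborFinset_eq_degree, hdegv]
  have nbrv : ∀ x, G.Adj v x → x = u := by
    intro x hx
    have : x ∈ G.neighborFinset v := (SimpleGraph.mem_neighborFinset G v x).2 hx
    rw [hNv] at this; simpa using this
  -- neighbors of u
  have hNu : G.neighborFinset u = {v, w} := by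
    refine (Finset.eq_of_subset_of_card_le ?_ ?_).symm
    · intro x hx
      simp only [Finset.mem_insert, Finset.mem_singleton] at hx
      rcases hx with h | h <;> simp [h, SimpleGraph.mem_neighborFinset, huv, huw]
    · rw [Finset.card_insert_of_notMem (by simp [hvw]), Finset.card_singleton,
        G.card_neighborFinset_eq_degree, hdegu]
  have nbru : ∀ x, G.Adj u x → x = v ∨ x = w := by
    intro x hx
    have : x ∈ G.neighborFinset u := (SimpleGraph.mem_neighborFinset G u x).2 hx
    rw [hNu] at this; simpa using this
  -- minimum cover D
  obtain ⟨D, hDmem, hDmin⟩ := Finset.exists_min_image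
      ((Finset.univ : Finset V).powerset.filter (fun C => IsP3VC G C)) Finset.card
      ⟨Finset.univ, by
        simp only [Finset.mem_filter, Finset.mem_powerset]
        exact ⟨le_refl _, fun a b c _ _ _ => Or.inl (Finset.mem_univ a)⟩⟩
  have hD : IsP3VC G D := (Finset.mem_filter.1 hDmem).2
  have hDle : ∀ E : Finset V, IsP3VC G E → D.card ≤ E.card := by
    intro E hE
    exact hDmin E (Finset.mem_filter.2 ⟨Finset.mem_powerset.2 (Finset.subset_univ E), hE⟩)
  set C : Finset V := insert w (D \ {u, v}) with hC
  have hwC : w ∈ C := Finset.mem_insert_self _ _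
  have huC : u ∉ C := by
    simp [hC, hwu.symm]
  have hvC : v ∉ C := by
    simp [hC, hvw]
  have hcover : IsP3VC G C := by
    intro a b c hab hbc hac
    by_contra hcon
    push_neg at hcon
    obtain ⟨ha, hb, hc⟩ := hcon
    have haw : a ≠ w := fun h => ha (h ▸ hwC)
    have hbw : b ≠ w := fun h => hb (h ▸ hwC)
    have hcw : c ≠ w := fun h => hc (h ▸ hwC)
    have hbu : b ≠ u := by
      intro h; subst h
      rcases nbru a hab.symm with h1 | h1
      · rcases nbru c hbc with h2 | h2
        · exact hac (h1.trans h2.symm)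
        · exact hcw h2
      · exact haw h1
    have hau : a ≠ u := by
      intro h; subst h
      rcases nbru b hab with h1 | h1
      · subst h1
        exact hac (nbrv c hbc).symm
      · exact hbw h1
    have hcu : c ≠ u := by
      intro h; subst h
      rcases nbru b hbc.symm with h1 | h1
      · subst h1
        exact hac (nbrv a hab.symm)
      · exact hbw h1
    have hav : a ≠ v := by
      intro h; subst h
      exact hbu (nbrv b hab)
    have hcv : c ≠ v := by
      intro h; subst h
      exact hbu (nbrv b hbc.symm)
    have hbv : b ≠ v := by
      intro h; subst h
      exact hac ((nbrv a hab.symm).trans (nbrv c hbc).symm)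
    rcases hD a b c hab hbc hac with h | h | h
    · exact ha (Finset.mem_insert_of_mem (by simp [h, hau, hav]))
    · exact hb (Finset.mem_insert_of_mem (by simp [h, hbu, hbv]))
    · exact hc (Finset.mem_insert_of_mem (by simp [h, hcu, hcv]))
  have hcard : C.card ≤ D.card := by
    by_cases huD : u ∈ D ∨ v ∈ D
    · have hsub : D \ {u, v} ⊆ D.erase (if u ∈ D then u else v) := by
        intro x hx
        simp only [Finset.mem_sdiff, Finset.mem_insert, Finset.mem_singleton] at hx
        push_neg at hx
        refine Finset.mem_erase.2 ⟨?_, hx.1⟩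
        split <;> [exact hx.2.1; exact hx.2.2]
      have hmem : (if u ∈ D then u else v) ∈ D := by
        split
        · assumption
        · rcases huD with h | h
          · exact absurd h (by assumption)
          · exact h
      calc C.card ≤ (D \ {u, v}).card + 1 := Finset.card_insert_le _ _
        _ ≤ (D.erase (if u ∈ D then u else v)).card + 1 :=
            Nat.add_le_add_right (Finset.card_le_card hsub) 1
        _ = (D.card - 1) + 1 := by rw [Finset.card_erase_of_mem hmem]
        _ ≤ D.card := by
            have := Finset.card_pos.2 ⟨_, hmem⟩
            omega
    · push_neg at huD
      have hwD : w ∈ D := by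
        rcases hD v u w hvu huw hvw with h | h | h
        · exact absurd h huD.2
        · exact absurd h huD.1
        · exact h
      refine Finset.card_le_card ?_
      intro x hx
      rcases Finset.mem_insert.1 hx with h | h
      · exact h ▸ hwD
      · exact (Finset.mem_sdiff.1 h).1
  exact ⟨C, ⟨hcover, fun E hE => le_trans hcard (hDle E hE)⟩, hwC, huC, hvC⟩
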